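/- Let m = 2^l and n = 4m+1, and let T_l be the oriented graph with vertices x_i for i ∈ Z/nZ and arcs x_i x_{i+m} and x_i x_{i+m+1}. Then T_l is n-nice: for every vertex x and every sequence α ∈ {+,−}^n, the iterated out/in-neighborhood N^α(x) equals all of V(T_l). -/

import Mathlib

/-- An oriented graph: a directed graph with no loops and no directed 2-cycles. -/
structure OGraph (V : Type*) where
  adj : V → V → Prop
  irrefl : ∀ v, ¬ adj v v
  asymm : ∀ u v, adj u v → ¬ adj v u

/-- A homomorphism of oriented graphs. -/
def OGraph.Hom {V W : Type*} (G : OGraph V) (H : OGraph W) (f : V → W) : Prop :=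
  ∀ u v, G.adj u v → H.adj (f u) (f v)

/-- `f` is a `b`-fold oriented `k`-coloring of `G`. -/
def IsFoldColoring {V : Type*} (G : OGraph V) (b k : ℕ) (f : V → Finset (Fin k)) : Prop :=
  (∀ v, (f v).card = b) ∧
  (∀ u v, G.adj u v → Disjoint (f u) (f v)) ∧
  (∀ x y z w, G.adj x y → G.adj z w → ¬ Disjoint (f x) (f w) → Disjoint (f y) (f z))

/-- The `b`-fold oriented chromatic number. -/
noncomputable def foldChrom {V : Type*} (G : OGraph V) (b : ℕ) : ℕ :=
  sInf {k | ∃ f : V → Finset (Fin k), IsFoldColoring G b k f}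

/-- The fractional oriented chromatic number: the infimum of `k/b` over all
`b`-fold oriented `k`-colorings. -/
noncomputable def fracChrom {V : Type*} (G : OGraph V) : ℝ :=
  sInf {x : ℝ | ∃ (b k : ℕ) (f : V → Finset (Fin k)),
    0 < b ∧ IsFoldColoring G b k f ∧ x = (k : ℝ) / b}

/-- The oriented graph `T_l` on `ℤ/(4·2^l+1)ℤ` with arcs `x → x + 2^l` and `x → x + 2^l + 1`. -/
def Tgraph (l : ℕ) : OGraph (ZMod (4 * 2 ^ l + 1)) where
  adj u v := v = u + (2 ^ l : ℕ) ∨ v = u + (2 ^ l : ℕ) + 1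
  irrefl := by
    intro v hv
    have hm : 0 < 2 ^ l := by positivity
    rcases hv with h | h
    · have h1 : ((2 ^ l : ℕ) : ZMod (4 * 2 ^ l + 1)) = 0 := left_eq_add.mp h
      rw [ZMod.natCast_eq_zero_iff] at h1
      have := Nat.le_of_dvd hm h1
      omega
    · have h1 : ((2 ^ l + 1 : ℕ) : ZMod (4 * 2 ^ l + 1)) = 0 := by
        have := left_eq_add.mp (by rwa [add_assoc] at h)
        push_cast
        push_cast at this
        linear_combination this
      rw [ZMod.natCast_eq_zero_iff] at h1
      have := Nat.le_of_dvd (by omega) h1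
      omega
  asymm := by
    intro u v h1 h2
    have key : ∀ a : ℕ, 0 < a → a < 4 * 2 ^ l + 1 →
        ((a : ℕ) : ZMod (4 * 2 ^ l + 1)) ≠ 0 := by
      intro a ha hlt h0
      rw [ZMod.natCast_eq_zero_iff] at h0
      have := Nat.le_of_dvd ha h0
      omega
    have hm : 0 < 2 ^ l := by positivity
    rcases h1 with h1 | h1 <;> rcases h2 with h2 | h2
    · have : ((2 ^ l + 2 ^ l : ℕ) : ZMod (4 * 2 ^ l + 1)) = 0 := by
        have : u = u + ((2 ^ l : ℕ) + (2 ^ l : ℕ)) := by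
          conv_lhs => rw [h2, h1]
          ring
        have := left_eq_add.mp this
        push_cast
        push_cast at this
        linear_combination this
      exact key _ (by omega) (by omega) this
    · have : ((2 ^ l + 2 ^ l + 1 : ℕ) : ZMod (4 * 2 ^ l + 1)) = 0 := by
        have : u = u + ((2 ^ l : ℕ) + (2 ^ l : ℕ) + 1) := by
          conv_lhs => rw [h2, h1]
          ring
        have := left_eq_add.mp this
        push_cast
        push_cast at this
        linear_combination this
      exact key _ (by omega) (by omega) this
    · have : ((2 ^ l + 2 ^ l + 1 : ℕ) : ZMod (4 * 2 ^ l + 1)) = 0 := by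
        have : u = u + ((2 ^ l : ℕ) + (2 ^ l : ℕ) + 1) := by
          conv_lhs => rw [h2, h1]
          ring
        have := left_eq_add.mp this
        push_cast
        push_cast at this
        linear_combination this
      exact key _ (by omega) (by omega) this
    · have : ((2 ^ l + 2 ^ l + 2 : ℕ) : ZMod (4 * 2 ^ l + 1)) = 0 := by
        have : u = u + ((2 ^ l : ℕ) + (2 ^ l : ℕ) + 2) := by
          conv_lhs => rw [h2, h1]
          ring
        have := left_eq_add.mp this
        push_cast
        push_cast at this
        linear_combination this
      exact key _ (by omega) (by omega) this

/-- Out-neighborhood of a set of vertices. -/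
def outN {V : Type*} (G : OGraph V) (S : Set V) : Set V := {v | ∃ u ∈ S, G.adj u v}

/-- In-neighborhood of a set of vertices. -/
def inN {V : Type*} (G : OGraph V) (S : Set V) : Set V := {v | ∃ u ∈ S, G.adj v u}

/-- Iterated out/in-neighborhood along a sign vector `α` (`true` = `+`, `false` = `-`);
the head of the list is applied last, i.e. `N^α(S) = N^{α₁}(N^{α'}(S))`. -/
def iterN {V : Type*} (G : OGraph V) : List Bool → Set V → Set V
  | [], S => S
  | (b :: α), S => (if b then outN G else inN G) (iterN G α S)

/-- Interval of `t` consecutive vertices starting at `a`. -/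
def Tint (l : ℕ) (a : ZMod (4 * 2 ^ l + 1)) (t : ℕ) : Set (ZMod (4 * 2 ^ l + 1)) :=
  {v | ∃ i < t, v = a + (i : ℕ)}

lemma outN_Tint (l : ℕ) (a : ZMod (4 * 2 ^ l + 1)) (t : ℕ) (ht : 0 < t) :
    outN (Tgraph l) (Tint l a t) = Tint l (a + (2 ^ l : ℕ)) (t + 1) := by
  ext v
  constructor
  · rintro ⟨u, ⟨i, hi, rfl⟩, h | h⟩
    · exact ⟨i, by omega, by rw [h]; ring⟩
    · exact ⟨i + 1, by omega, by rw [h]; push_cast; ring⟩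
  · rintro ⟨j, hj, rfl⟩
    rcases Nat.eq_zero_or_pos j with rfl | hjp
    · exact ⟨a, ⟨0, ht, by push_cast; ring⟩, Or.inl (by push_cast; ring)⟩
    · refine ⟨a + ((j - 1 : ℕ) : ZMod (4 * 2 ^ l + 1)), ⟨j - 1, by omega, rfl⟩,
        Or.inr ?_⟩
      have : ((j - 1 : ℕ) : ZMod (4 * 2 ^ l + 1)) + 1 = (j : ℕ) := by
        push_cast [Nat.cast_sub hjp]; ring
      linear_combination -this

lemma inN_Tint (l : ℕ) (a : ZMod (4 * 2 ^ l + 1)) (t : ℕ) (ht : 0 < t) :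
    inN (Tgraph l) (Tint l a t) = Tint l (a - (2 ^ l : ℕ) - 1) (t + 1) := by
  ext v
  constructor
  · rintro ⟨u, ⟨i, hi, rfl⟩, h | h⟩
    · refine ⟨i + 1, by omega, ?_⟩
      push_cast at h ⊢
      linear_combination -h
    · refine ⟨i, by omega, ?_⟩
      push_cast at h ⊢
      linear_combination -h
  · rintro ⟨j, hj, rfl⟩
    rcases Nat.eq_zero_or_pos j with rfl | hjp
    · exact ⟨a, ⟨0, ht, by push_cast; ring⟩, Or.inr (by push_cast; ring)⟩
    · refine ⟨a + ((j - 1 : ℕ) : ZMod (4 * 2 ^ l + 1)), ⟨j - 1, by omega, rfl⟩,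
        Or.inl ?_⟩
      have : ((j - 1 : ℕ) : ZMod (4 * 2 ^ l + 1)) + 1 = (j : ℕ) := by
        push_cast [Nat.cast_sub hjp]; ring
      linear_combination this

lemma iterN_Tint (l : ℕ) (α : List Bool) (x : ZMod (4 * 2 ^ l + 1)) :
    ∃ a, iterN (Tgraph l) α {x} = Tint l a (α.length + 1) := by
  induction α with
  | nil =>
    refine ⟨x, ?_⟩
    ext v
    simp only [iterN, Tint, Set.mem_singleton_iff, Set.mem_setOf_eq]
    constructor
    · rintro rfl; exact ⟨0, by omega, by push_cast; ring⟩
    · rintro ⟨i, hi, rfl⟩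
      simp only [List.length_nil] at hi
      obtain rfl : i = 0 := by omega
      push_cast; ring
  | cons b α ih =>
    obtain ⟨a, ha⟩ := ih
    cases b with
    | true =>
      refine ⟨a + (2 ^ l : ℕ), ?_⟩
      simp only [iterN, if_true, ha, List.length_cons]
      exact outN_Tint l a _ (by omega)
    | false =>
      refine ⟨a - (2 ^ l : ℕ) - 1, ?_⟩
      simp only [iterN, if_false, ha, List.length_cons]
      exact inN_Tint l a _ (by omega)

theorem stmt17 (l : ℕ) (α : List Bool) (hα : α.length = 4 * 2 ^ l + 1)
    (x : ZMod (4 * 2 ^ l + 1)) :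
    iterN (Tgraph l) α {x} = Set.univ := by
  obtain ⟨a, ha⟩ := iterN_Tint l α x
  rw [ha, hα]
  ext v
  simp only [Set.mem_univ, iff_true, Tint, Set.mem_setOf_eq]
  refine ⟨(v - a).val, ?_, ?_⟩
  · have := ZMod.val_lt (v - a)
    omega
  · rw [ZMod.natCast_val, ZMod.cast_id]
    ring
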